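/- arXiv:2503.08499 — 11 statements merged into one kernel-verified Lean document; each statement's English description precedes it below -/
import Mathlib

section
/- Let r be a natural number and let m_1 ≤ m_2 ≤ … ≤ m_r be integers with each m_j ≥ 2. Suppose that Θ(A) = -2 + Σ_{j=1}^r (1 - 1/m_j) is positive, that α(A) = 2/Θ(A) is a positive integer, and that m_j divides α(A) for every j ∈ {1,…,r}. Then 3 ≤ r ≤ 6. -/
/-- For a nondecreasing tuple `A = (m 0, …, m (r-1))` of integers `≥ 2`, if
`Θ(A) = -2 + Σ_j (1 - 1/m j)` is positive, `α(A) = 2/Θ(A)` is a positive integer,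
and every `m j` divides `α(A)`, then `3 ≤ r ≤ 6`. -/
theorem stmt_0 (r : ℕ) (m : Fin r → ℕ) (hmono : Monotone m)
    (h2 : ∀ j, 2 ≤ m j)
    (Θ : ℚ) (hΘ : Θ = -2 + ∑ j, (1 - 1 / (m j : ℚ))) (hΘpos : 0 < Θ)
    (α : ℕ) (hαpos : 0 < α) (hα : (α : ℚ) = 2 / Θ)
    (hdvd : ∀ j, m j ∣ α) :
    3 ≤ r ∧ r ≤ 6 := by
  have hub : ∑ j, (1 - 1 / (m j : ℚ)) ≤ ∑ _j : Fin r, (1 : ℚ) := by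
    apply Finset.sum_le_sum
    intro j _
    have hmj : (0:ℚ) < m j := by
      have := h2 j; positivity
    have : 0 ≤ 1 / (m j : ℚ) := by positivity
    linarith
  have hc1 : ∑ _j : Fin r, (1:ℚ) = r := by simp
  have hub' : Θ ≤ -2 + r := by
    rw [hc1] at hub; rw [hΘ]; linarith
  have hr3 : 3 ≤ r := by
    have h2r : (2:ℚ) < r := by linarith
    exact_mod_cast h2r
  refine ⟨hr3, ?_⟩
  -- lower bound on each summand
  have hlb : ∑ _j : Fin r, (1/2 : ℚ) ≤ ∑ j, (1 - 1 / (m j : ℚ)) := by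
    apply Finset.sum_le_sum
    intro j _
    have hmj : (2:ℚ) ≤ m j := by exact_mod_cast h2 j
    have : 1 / (m j : ℚ) ≤ 1/2 := by
      rw [div_le_div_iff₀ (by linarith) (by norm_num)]
      linarith
    linarith
  have hc2 : ∑ _j : Fin r, (1/2:ℚ) = r/2 := by
    rw [Finset.sum_const, Finset.card_univ, Fintype.card_fin, nsmul_eq_mul]; ring
  have hlb' : (-2 + r/2 : ℚ) ≤ Θ := by
    rw [hc2] at hlb; rw [hΘ]; linarith
  -- α * Θ = 2
  have hΘne : Θ ≠ 0 := ne_of_gt hΘpos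
  have hmul : (α : ℚ) * Θ = 2 := by
    rw [hα, div_mul_cancel₀ _ hΘne]
  -- α ≥ 2
  have hα2 : 2 ≤ α := by
    have j0 : Fin r := ⟨0, by omega⟩
    have := Nat.le_of_dvd hαpos (hdvd j0)
    have := h2 j0
    omega
  have hα2' : (2:ℚ) ≤ α := by exact_mod_cast hα2
  have : (2:ℚ) * Θ ≤ (α:ℚ) * Θ :=
    mul_le_mul_of_nonneg_right hα2' (le_of_lt hΘpos)
  have hr6 : (r:ℚ) ≤ 6 := by linarith
  exact_mod_cast hr6
end

section
/- Let r ∈ {5,6} and let m_1 ≤ … ≤ m_r be integers with each m_j ≥ 2 such that Θ(A) = -2 + Σ_{j=1}^r (1 - 1/m_j) > 0, α(A) = 2/Θ(A) is a positive integer, and m_j divides α(A) for every j. Then m_j = 2 for all j; moreover α(A) = 2 if r = 6 and α(A) = 4 if r = 5. -/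
/-- If `r ∈ {5,6}` and `A = (m 0, …, m (r-1))` is a nondecreasing tuple of integers `≥ 2`
with `Θ(A) = -2 + Σ_j (1 - 1/m j) > 0`, `α(A) = 2/Θ(A)` a positive integer, and
`m j ∣ α(A)` for all `j`, then all `m j = 2`; moreover `α(A) = 2` if `r = 6`
and `α(A) = 4` if `r = 5`. -/
theorem stmt_1 (r : ℕ) (hr : r = 5 ∨ r = 6) (m : Fin r → ℕ) (hmono : Monotone m)
    (h2 : ∀ j, 2 ≤ m j)
    (Θ : ℚ) (hΘ : Θ = -2 + ∑ j, (1 - 1 / (m j : ℚ))) (hΘpos : 0 < Θ)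
    (α : ℕ) (hαpos : 0 < α) (hα : (α : ℚ) = 2 / Θ)
    (hdvd : ∀ j, m j ∣ α) :
    (∀ j, m j = 2) ∧ (r = 6 → α = 2) ∧ (r = 5 → α = 4) := by
  have hΘne : Θ ≠ 0 := ne_of_gt hΘpos
  have hkey : (α:ℚ) * Θ = 2 := by
    rw [hα, div_mul_cancel₀ _ hΘne]
  choose c hc using hdvd
  have key : ∀ j, (α:ℚ) * (1 - 1/(m j : ℚ)) = (α:ℚ) - (c j : ℚ) := by
    intro j
    have hm : (m j : ℚ) ≠ 0 := by
      have := h2 j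
      exact Nat.cast_ne_zero.mpr (by omega)
    have hq : (α:ℚ) = (m j : ℚ) * (c j : ℚ) := by exact_mod_cast hc j
    rw [hq]
    field_simp
  have hsum : (∑ j, ((α:ℚ) - (c j : ℚ))) = 2 + 2 * α := by
    have h1 : (α:ℚ) * (-2 + ∑ j, (1 - 1/(m j : ℚ))) = 2 := by rw [← hΘ]; exact hkey
    rw [mul_add, Finset.mul_sum] at h1
    have h3 : ∑ j, ((α:ℚ) - (c j : ℚ)) = ∑ j, (α:ℚ) * (1 - 1/(m j : ℚ)) :=
      Finset.sum_congr rfl fun j _ => (key j).symm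
    rw [h3]
    linarith
  have hz : (r:ℤ) * α - ∑ j, (c j : ℤ) = 2 + 2 * α := by
    have h2' : ((r:ℚ)) * α - ∑ j, (c j:ℚ) = 2 + 2*α := by
      rw [Finset.sum_sub_distrib, Finset.sum_const, Finset.card_univ, Fintype.card_fin,
        nsmul_eq_mul] at hsum
      linarith
    exact_mod_cast h2'
  have hc1 : ∀ j, 1 ≤ c j := by
    intro j
    rcases Nat.eq_zero_or_pos (c j) with h | h
    · rw [hc j, h, mul_zero] at hαpos; omega
    · omega
  have hc2 : ∀ j, 2 * c j ≤ α := by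
    intro j
    rw [hc j]
    exact Nat.mul_le_mul_right _ (h2 j)
  rcases hr with hr | hr <;> subst hr
  · simp only [Fin.sum_univ_five] at hz
    have e0 := hc1 0; have e1 := hc1 1; have e2 := hc1 2; have e3 := hc1 3; have e4 := hc1 4
    have f0 := hc2 0; have f1 := hc2 1; have f2 := hc2 2; have f3 := hc2 3; have f4 := hc2 4
    have hαc : α = 4 ∧ c 0 = 2 ∧ c 1 = 2 ∧ c 2 = 2 ∧ c 3 = 2 ∧ c 4 = 2 := by
      push_cast at hz
      have h4 : α ≤ 4 := by omega
      interval_cases α <;> omega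
    obtain ⟨ha, h0, h1, h2', h3, h4⟩ := hαc
    have g0 : m 0 = 2 := by have h := hc 0; rw [h0] at h; omega
    have g1 : m 1 = 2 := by have h := hc 1; rw [h1] at h; omega
    have g2 : m 2 = 2 := by have h := hc 2; rw [h2'] at h; omega
    have g3 : m 3 = 2 := by have h := hc 3; rw [h3] at h; omega
    have g4 : m 4 = 2 := by have h := hc 4; rw [h4] at h; omega
    refine ⟨?_, by omega, fun _ => ha⟩
    intro j
    fin_cases j <;> assumption
  · simp only [Fin.sum_univ_six] at hz
    have e0 := hc1 0; have e1 := hc1 1; have e2 := hc1 2; have e3 := hc1 3; have e4 := hc1 4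
    have e5 := hc1 5
    have f0 := hc2 0; have f1 := hc2 1; have f2 := hc2 2; have f3 := hc2 3; have f4 := hc2 4
    have f5 := hc2 5
    have hαc : α = 2 ∧ c 0 = 1 ∧ c 1 = 1 ∧ c 2 = 1 ∧ c 3 = 1 ∧ c 4 = 1 ∧ c 5 = 1 := by
      push_cast at hz
      have h4 : α ≤ 2 := by omega
      interval_cases α <;> omega
    obtain ⟨ha, h0, h1, h2', h3, h4, h5⟩ := hαc
    have g0 : m 0 = 2 := by have h := hc 0; rw [h0] at h; omega
    have g1 : m 1 = 2 := by have h := hc 1; rw [h1] at h; omega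
    have g2 : m 2 = 2 := by have h := hc 2; rw [h2'] at h; omega
    have g3 : m 3 = 2 := by have h := hc 3; rw [h3] at h; omega
    have g4 : m 4 = 2 := by have h := hc 4; rw [h4] at h; omega
    have g5 : m 5 = 2 := by have h := hc 5; rw [h5] at h; omega
    refine ⟨?_, fun _ => ha, by omega⟩
    intro j
    fin_cases j <;> assumption
end

section
/- Let m_1 ≤ m_2 ≤ m_3 ≤ m_4 be integers with each m_j ≥ 2 such that Θ(A) = -2 + Σ_{j=1}^4 (1 - 1/m_j) > 0, α(A) = 2/Θ(A) is a positive integer, and m_j divides α(A) for every j. Then (m_1,m_2,m_3,m_4) is one of the following six quadruples, with the indicated value of α(A): (2,2,2,3) with α = 12; (2,2,2,4) with α = 8; (2,2,2,6) with α = 6; (2,2,3,3) with α = 6; (2,2,4,4) with α = 4; (3,3,3,3) with α = 3. -/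
/-- If `(m 0, m 1, m 2, m 3)` is a nondecreasing quadruple of integers `≥ 2` with
`Θ(A) = -2 + Σ_j (1 - 1/m j) > 0`, `α(A) = 2/Θ(A)` a positive integer, and
`m j ∣ α(A)` for all `j`, then the quadruple is one of the six listed ones, with
the indicated value of `α(A)`. -/
theorem stmt_2 (m : Fin 4 → ℕ) (hmono : Monotone m)
    (h2 : ∀ j, 2 ≤ m j)
    (Θ : ℚ) (hΘ : Θ = -2 + ∑ j, (1 - 1 / (m j : ℚ))) (hΘpos : 0 < Θ)
    (α : ℕ) (hαpos : 0 < α) (hα : (α : ℚ) = 2 / Θ)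
    (hdvd : ∀ j, m j ∣ α) :
    (m 0 = 2 ∧ m 1 = 2 ∧ m 2 = 2 ∧ m 3 = 3 ∧ α = 12) ∨
    (m 0 = 2 ∧ m 1 = 2 ∧ m 2 = 2 ∧ m 3 = 4 ∧ α = 8) ∨
    (m 0 = 2 ∧ m 1 = 2 ∧ m 2 = 2 ∧ m 3 = 6 ∧ α = 6) ∨
    (m 0 = 2 ∧ m 1 = 2 ∧ m 2 = 3 ∧ m 3 = 3 ∧ α = 6) ∨
    (m 0 = 2 ∧ m 1 = 2 ∧ m 2 = 4 ∧ m 3 = 4 ∧ α = 4) ∨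
    (m 0 = 3 ∧ m 1 = 3 ∧ m 2 = 3 ∧ m 3 = 3 ∧ α = 3) := by
  have h01 : m 0 ≤ m 1 := hmono (by decide : (0:Fin 4) ≤ 1)
  have h12 : m 1 ≤ m 2 := hmono (by decide : (1:Fin 4) ≤ 2)
  have h23 : m 2 ≤ m 3 := hmono (by decide : (2:Fin 4) ≤ 3)
  have ha2 := h2 0; have hb2 := h2 1; have hc2 := h2 2; have hd2 := h2 3
  have hda := hdvd 0; have hdb := hdvd 1; have hdc := hdvd 2; have hdd := hdvd 3
  rw [Fin.sum_univ_four] at hΘ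
  set a := m 0 with hA
  set b := m 1 with hB
  set c := m 2 with hC
  set d := m 3 with hD
  clear_value a b c d
  clear hmono h2 hdvd hA hB hC hD
  have hd0 : (0:ℚ) < d := by positivity
  have hΘne : Θ ≠ 0 := ne_of_gt hΘpos
  have hE : (α:ℚ) * Θ = 2 := by rw [hα]; field_simp
  have hαd : d ≤ α := Nat.le_of_dvd hαpos hdd
  have h1a : (1:ℚ)/a ≤ 1/2 := by
    apply one_div_le_one_div_of_le (by norm_num); exact_mod_cast ha2
  have h1b : (1:ℚ)/b ≤ 1/2 := by
    apply one_div_le_one_div_of_le (by norm_num); exact_mod_cast hb2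
  have h1c : (1:ℚ)/c ≤ 1/2 := by
    apply one_div_le_one_div_of_le (by norm_num); exact_mod_cast hc2
  have hΘlb : 1/2 - 1/(d:ℚ) ≤ Θ := by rw [hΘ]; linarith
  have hd6 : d ≤ 6 := by
    by_contra h
    push_neg at h
    have hd7 : (7:ℚ) ≤ d := by exact_mod_cast h
    have hαd' : (d:ℚ) ≤ α := by exact_mod_cast hαd
    have h17 : (1:ℚ)/d ≤ 1/7 := one_div_le_one_div_of_le (by norm_num) hd7
    have hm : (d:ℚ) * (1/2 - 1/7) ≤ (α:ℚ) * Θ := by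
      apply mul_le_mul hαd' (by linarith) (by norm_num) (by positivity)
    rw [hE] at hm
    linarith
  clear hΘlb h1a h1b h1c hE hΘne hd0 hαd
  interval_cases d <;> interval_cases c <;> interval_cases b <;> interval_cases a <;>
    first
      | (rw [hΘ] at hΘpos; norm_num at hΘpos; done)
      | (rw [hΘ] at hα; norm_num at hα; (try norm_cast at hα); omega)
      | (exfalso; rw [hΘ] at hα; norm_num at hα;
         have hden := congrArg Rat.den hα; norm_num at hden)
end

section
/- Let m_1 ≤ m_2 ≤ m_3 be integers with each m_j ≥ 2 such that Θ(A) = -2 + Σ_{j=1}^3 (1 - 1/m_j) > 0, α(A) = 2/Θ(A) is a positive integer, and m_j divides α(A) for every j. Then (m_1,m_2,m_3) is one of the following 22 triples, with the indicated value of α(A): (2,3,7), α = 84; (2,3,8), α = 48; (2,4,5), α = 40; (2,3,9), α = 36; (2,3,10), α = 30; (2,3,12), α = 24; (2,4,6), α = 24; (3,3,4), α = 24; (2,5,5), α = 20; (2,3,18), α = 18; (2,4,8), α = 16; (3,3,5), α = 15; (2,4,12), α = 12; (2,6,6), α = 12; (3,3,6), α = 12; (3,4,4), α = 12; (2,5,10),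 α = 10; (3,3,9), α = 9; (2,8,8), α = 8; (4,4,4), α = 8; (3,6,6), α = 6; (5,5,5), α = 5. -/
set_option maxHeartbeats 1600000


/-- If `(m 0, m 1, m 2)` is a nondecreasing triple of integers `≥ 2` with
`Θ(A) = -2 + Σ_j (1 - 1/m j) > 0`, `α(A) = 2/Θ(A)` a positive integer, and
`m j ∣ α(A)` for all `j`, then the triple is one of the 22 listed ones, with
the indicated value of `α(A)`. -/
theorem stmt_3 (m : Fin 3 → ℕ) (hmono : Monotone m)
    (h2 : ∀ j, 2 ≤ m j)
    (Θ : ℚ) (hΘ : Θ = -2 + ∑ j, (1 - 1 / (m j : ℚ))) (hΘpos : 0 < Θ)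
    (α : ℕ) (hαpos : 0 < α) (hα : (α : ℚ) = 2 / Θ)
    (hdvd : ∀ j, m j ∣ α) :
    (m 0 = 2 ∧ m 1 = 3 ∧ m 2 = 7 ∧ α = 84) ∨
    (m 0 = 2 ∧ m 1 = 3 ∧ m 2 = 8 ∧ α = 48) ∨
    (m 0 = 2 ∧ m 1 = 4 ∧ m 2 = 5 ∧ α = 40) ∨
    (m 0 = 2 ∧ m 1 = 3 ∧ m 2 = 9 ∧ α = 36) ∨
    (m 0 = 2 ∧ m 1 = 3 ∧ m 2 = 10 ∧ α = 30) ∨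
    (m 0 = 2 ∧ m 1 = 3 ∧ m 2 = 12 ∧ α = 24) ∨
    (m 0 = 2 ∧ m 1 = 4 ∧ m 2 = 6 ∧ α = 24) ∨
    (m 0 = 3 ∧ m 1 = 3 ∧ m 2 = 4 ∧ α = 24) ∨
    (m 0 = 2 ∧ m 1 = 5 ∧ m 2 = 5 ∧ α = 20) ∨
    (m 0 = 2 ∧ m 1 = 3 ∧ m 2 = 18 ∧ α = 18) ∨
    (m 0 = 2 ∧ m 1 = 4 ∧ m 2 = 8 ∧ α = 16) ∨
    (m 0 = 3 ∧ m 1 = 3 ∧ m 2 = 5 ∧ α = 15) ∨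
    (m 0 = 2 ∧ m 1 = 4 ∧ m 2 = 12 ∧ α = 12) ∨
    (m 0 = 2 ∧ m 1 = 6 ∧ m 2 = 6 ∧ α = 12) ∨
    (m 0 = 3 ∧ m 1 = 3 ∧ m 2 = 6 ∧ α = 12) ∨
    (m 0 = 3 ∧ m 1 = 4 ∧ m 2 = 4 ∧ α = 12) ∨
    (m 0 = 2 ∧ m 1 = 5 ∧ m 2 = 10 ∧ α = 10) ∨
    (m 0 = 3 ∧ m 1 = 3 ∧ m 2 = 9 ∧ α = 9) ∨
    (m 0 = 2 ∧ m 1 = 8 ∧ m 2 = 8 ∧ α = 8) ∨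
    (m 0 = 4 ∧ m 1 = 4 ∧ m 2 = 4 ∧ α = 8) ∨
    (m 0 = 3 ∧ m 1 = 6 ∧ m 2 = 6 ∧ α = 6) ∨
    (m 0 = 5 ∧ m 1 = 5 ∧ m 2 = 5 ∧ α = 5) := by
  obtain ⟨k0, hk0⟩ := hdvd 0
  obtain ⟨k1, hk1⟩ := hdvd 1
  obtain ⟨k2, hk2⟩ := hdvd 2
  set a := m 0 with ha
  set b := m 1 with hb
  set c := m 2 with hc
  have hab : a ≤ b := hmono (by decide : (0 : Fin 3) ≤ 1)
  have hbc : b ≤ c := hmono (by decide : (1 : Fin 3) ≤ 2)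
  have h2a : 2 ≤ a := h2 0
  have h2b : 2 ≤ b := h2 1
  have h2c : 2 ≤ c := h2 2
  rw [Fin.sum_univ_three] at hΘ
  have haq : (a : ℚ) ≠ 0 := by positivity
  have hbq : (b : ℚ) ≠ 0 := by positivity
  have hcq : (c : ℚ) ≠ 0 := by positivity
  have hΘne : Θ ≠ 0 := ne_of_gt hΘpos
  have ea : (α : ℚ) = (a : ℚ) * (k0 : ℚ) := by exact_mod_cast hk0
  have eb : (α : ℚ) = (b : ℚ) * (k1 : ℚ) := by exact_mod_cast hk1
  have ec : (α : ℚ) = (c : ℚ) * (k2 : ℚ) := by exact_mod_cast hk2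
  have d0 : (α : ℚ) / a = k0 := by rw [div_eq_iff haq, ea]; ring
  have d1 : (α : ℚ) / b = k1 := by rw [div_eq_iff hbq, eb]; ring
  have d2 : (α : ℚ) / c = k2 := by rw [div_eq_iff hcq, ec]; ring
  have h1 : (α : ℚ) * Θ = 2 := by rw [hα]; field_simp
  rw [hΘ] at h1
  have key : (α : ℚ) = 2 + k0 + k1 + k2 := by
    linear_combination h1 + d0 + d1 + d2
  have keyn : α = 2 + k0 + k1 + k2 := by exact_mod_cast key
  have hk0pos : 1 ≤ k0 := by
    rcases Nat.eq_zero_or_pos k0 with h | h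
    · subst h; simp at hk0; omega
    · exact h
  have hk1pos : 1 ≤ k1 := by
    rcases Nat.eq_zero_or_pos k1 with h | h
    · subst h; simp at hk1; omega
    · exact h
  have hk2pos : 1 ≤ k2 := by
    rcases Nat.eq_zero_or_pos k2 with h | h
    · subst h; simp at hk2; omega
    · exact h
  have hk10 : k1 ≤ k0 := by
    have h1' : b * k1 ≤ b * k0 := by
      calc b * k1 = a * k0 := by omega
        _ ≤ b * k0 := Nat.mul_le_mul_right k0 hab
    exact Nat.le_of_mul_le_mul_left h1' (by omega)
  have hk21 : k2 ≤ k1 := by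
    have h1' : c * k2 ≤ c * k1 := by
      calc c * k2 = b * k1 := by omega
        _ ≤ c * k1 := Nat.mul_le_mul_right k1 hbc
    exact Nat.le_of_mul_le_mul_left h1' (by omega)
  clear_value a b c
  clear hmono h2 hdvd hΘ hα hΘpos hΘne haq hbq hcq ea eb ec d0 d1 d2 h1 key ha hb hc
  -- bounds
  have hA : a ≤ 5 := by nlinarith [hk0, keyn, hk10, hk21, hk0pos]
  have hB : b ≤ 8 := by
    have h2k0 : 2 * k0 ≤ a * k0 := Nat.mul_le_mul_right k0 h2a
    nlinarith [hk0, hk1, keyn, hk21, hk1pos, h2k0]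
  have hC : c ≤ 18 := by
    rcases Nat.lt_or_ge b 3 with h3 | h3
    · -- then a = b = 2, contradiction
      have haa : a = 2 := by omega
      have hbb : b = 2 := by omega
      rw [haa] at hk0; rw [hbb] at hk1
      omega
    · have h2k0 : 2 * k0 ≤ a * k0 := Nat.mul_le_mul_right k0 h2a
      have h3k1 : 3 * k1 ≤ b * k1 := Nat.mul_le_mul_right k1 h3
      nlinarith [hk0, hk1, hk2, keyn, hk2pos, h2k0, h3k1]
  clear hαpos
  have ha' : a = 2 ∨ a = 3 ∨ a = 4 ∨ a = 5 := by omega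
  have hb' : b = 2 ∨ b = 3 ∨ b = 4 ∨ b = 5 ∨ b = 6 ∨ b = 7 ∨ b = 8 := by omega
  have hc' : c = 2 ∨ c = 3 ∨ c = 4 ∨ c = 5 ∨ c = 6 ∨ c = 7 ∨ c = 8 ∨ c = 9 ∨ c = 10 ∨ c = 11 ∨ c = 12 ∨ c = 13 ∨ c = 14 ∨ c = 15 ∨ c = 16 ∨ c = 17 ∨ c = 18 := by omega
  clear hA hB hC h2a h2b h2c
  rcases ha' with rfl | rfl | rfl | rfl <;>
    rcases hb' with rfl | rfl | rfl | rfl | rfl | rfl | rfl <;>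
      first
      | (exfalso; omega)
      | (rcases hc' with rfl | rfl | rfl | rfl | rfl | rfl | rfl | rfl | rfl | rfl | rfl | rfl | rfl | rfl | rfl | rfl | rfl <;>
          first
          | (exfalso; omega)
          | (norm_num; omega))
end

section
/- Let n be an integer with 4 ≤ n ≤ 5 and let a_1, …, a_n be integers with each a_i ≥ 2. Set N = ∏_{i=1}^n a_i and for each i set α_i = ∏_{j ≠ i} a_j. Suppose α_i ∈ S for every i, where S = {2,3,4,5,6,8,9,10,12,15,16,18,20,24,30,36,40,48,84}. Then N has at most 3 distinct prime divisors. -/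
/-- If `4 ≤ n ≤ 5`, `a 1, …, a n ≥ 2` are integers, `N = ∏ a i`, and each
`α i = ∏_{j ≠ i} a j` lies in the list `S` of possible values of `α(A)`, then `N`
has at most `3` distinct prime divisors. -/
theorem stmt_6 (n : ℕ) (hn4 : 4 ≤ n) (hn5 : n ≤ 5) (a : Fin n → ℕ)
    (ha : ∀ i, 2 ≤ a i)
    (N : ℕ) (hN : N = ∏ i, a i)
    (α : Fin n → ℕ) (hα : ∀ i, α i = ∏ j ∈ Finset.univ.erase i, a j)
    (hS : ∀ i, α i ∈ ({2, 3, 4, 5, 6, 8, 9, 10, 12, 15, 16, 18, 20, 24, 30, 36, 40, 48, 84} : Finset ℕ)) :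
    N.primeFactors.card ≤ 3 := by
  -- every α i divides 5040
  have hα5040 : ∀ i, α i ∣ 5040 := by
    intro i
    have := hS i
    simp only [Finset.mem_insert, Finset.mem_singleton] at this
    rcases this with h|h|h|h|h|h|h|h|h|h|h|h|h|h|h|h|h|h|h <;> rw [h] <;> norm_num
  -- for any prime p dividing N there is i with p ∣ a i
  have key : ∀ p : ℕ, p.Prime → p ∣ N → ∃ i, p ∣ a i := by
    intro p hp hd
    rw [hN] at hd
    obtain ⟨i, _, hi⟩ := hp.prime.exists_mem_finset_dvd hd
    exact ⟨i, hi⟩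
  -- if p ∣ a i and j ≠ i then p ∣ α j
  have dvdα : ∀ (p : ℕ) (i j : Fin n), p ∣ a i → j ≠ i → p ∣ α j := by
    intro p i j hpi hji
    rw [hα j]
    exact hpi.trans (Finset.dvd_prod_of_mem a (by simp [Finset.mem_erase, Ne.symm hji]))
  -- prime factors of N lie in {2,3,5,7}
  have hsub : N.primeFactors ⊆ ({2, 3, 5, 7} : Finset ℕ) := by
    intro p hp
    obtain ⟨hpp, hpd, hN0⟩ := Nat.mem_primeFactors.mp hp
    obtain ⟨i, hi⟩ := key p hpp hpd
    -- choose j ≠ i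
    obtain ⟨j, hji⟩ : ∃ j : Fin n, j ≠ i := by
      have h2 : 2 ≤ n := by omega
      exact ⟨if i = ⟨0, by omega⟩ then ⟨1, by omega⟩ else ⟨0, by omega⟩, by
        split <;> simp_all [Fin.ext_iff] <;> omega⟩
    have hpα : p ∣ α j := dvdα p i j hi hji
    have hd : p ∣ 5040 := hpα.trans (hα5040 j)
    have hp2 : 2 ≤ p := hpp.two_le
    have hple : p ≤ 5040 := Nat.le_of_dvd (by norm_num) hd
    have hαle : α j ≤ 84 := by
      have := hS j
      simp only [Finset.mem_insert, Finset.mem_singleton] at this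
      omega
    have hα0 : 0 < α j := by
      have := hS j
      simp only [Finset.mem_insert, Finset.mem_singleton] at this
      omega
    have hp84 : p ≤ 84 := Nat.le_of_dvd hα0 hpα |>.trans hαle
    interval_cases p <;> revert hd hpp <;> decide
  -- 5 and 7 cannot both divide N
  have not57 : ¬ (5 ∈ N.primeFactors ∧ 7 ∈ N.primeFactors) := by
    rintro ⟨h5, h7⟩
    obtain ⟨hp5, hd5, -⟩ := Nat.mem_primeFactors.mp h5
    obtain ⟨hp7, hd7, -⟩ := Nat.mem_primeFactors.mp h7
    obtain ⟨i, hi⟩ := key 5 hp5 hd5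
    obtain ⟨k, hk⟩ := key 7 hp7 hd7
    -- find j different from both i and k
    obtain ⟨j, hji, hjk⟩ : ∃ j : Fin n, j ≠ i ∧ j ≠ k := by
      by_contra hcon
      push_neg at hcon
      have hsub2 : (Finset.univ : Finset (Fin n)) ⊆ {i, k} := by
        intro x _
        rcases Classical.em (x = i) with h|h
        · simp [h]
        · simp [hcon x h]
      have := Finset.card_le_card hsub2
      simp only [Finset.card_univ, Fintype.card_fin] at this
      have : n ≤ ({i, k} : Finset (Fin n)).card := this
      have hle : ({i, k} : Finset (Fin n)).card ≤ 2 := Finset.card_insert_le _ _ |>.trans (by simp)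
      omega
    have h5α : 5 ∣ α j := dvdα 5 i j hi hji
    have h7α : 7 ∣ α j := dvdα 7 k j hk hjk
    have h35 : 35 ∣ α j := Nat.Coprime.mul_dvd_of_dvd_of_dvd (by norm_num) h5α h7α
    have := hS j
    simp only [Finset.mem_insert, Finset.mem_singleton] at this
    omega
  -- conclude
  by_cases h5 : 5 ∈ N.primeFactors
  · have h7 : 7 ∉ N.primeFactors := fun h7 => not57 ⟨h5, h7⟩
    have : N.primeFactors ⊆ ({2, 3, 5} : Finset ℕ) := by
      intro p hp
      have := hsub hp
      simp only [Finset.mem_insert, Finset.mem_singleton] at this ⊢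
      rcases this with h|h|h|h
      · tauto
      · tauto
      · tauto
      · exact absurd (h ▸ hp) h7
    calc N.primeFactors.card ≤ ({2,3,5} : Finset ℕ).card := Finset.card_le_card this
      _ ≤ 3 := by decide
  · have : N.primeFactors ⊆ ({2, 3, 7} : Finset ℕ) := by
      intro p hp
      have := hsub hp
      simp only [Finset.mem_insert, Finset.mem_singleton] at this ⊢
      rcases this with h|h|h|h
      · tauto
      · tauto
      · exact absurd (h ▸ hp) h5
      · tauto
    calc N.primeFactors.card ≤ ({2,3,7} : Finset ℕ).card := Finset.card_le_card this
      _ ≤ 3 := by decide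
end

section
/- Let n be an integer with 4 ≤ n ≤ 5 and let a_1, …, a_n be integers with each a_i ≥ 2. Set N = ∏_{i=1}^n a_i and for each i set α_i = ∏_{j ≠ i} a_j. Suppose α_i ∈ S for every i, where S = {2,3,4,5,6,8,9,10,12,15,16,18,20,24,30,36,40,48,84}, and suppose N has exactly 3 distinct prime divisors. Then n = 4 and either N = 60 and the multiset {α_1, α_2, α_3, α_4} equals {12, 20, 30, 30}, or N = 168 and the multiset {α_1, α_2, α_3, α_4} equals {8, 84, 84, 84}. -/
def SF : Finset ℕ := {2, 3, 4, 5, 6, 8, 9, 10, 12, 15, 16, 18, 20, 24, 30, 36, 40, 48, 84}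

def R4 (y z w x : ℕ) : Prop :=
  (x+2)*((z+2)*(w+2)) ∈ SF → (x+2)*((y+2)*(w+2)) ∈ SF → (x+2)*((y+2)*(z+2)) ∈ SF →
    ((x+2)*((y+2)*((z+2)*(w+2))) ∈ ([16,24,32,36,40,48,72,80,96,144] : List ℕ)
     ∨ ((x+2)*((y+2)*((z+2)*(w+2))) = 60 ∧
         ({(y+2)*((z+2)*(w+2)), (x+2)*((z+2)*(w+2)), (x+2)*((y+2)*(w+2)), (x+2)*((y+2)*(z+2))} : Multiset ℕ) = {12,20,30,30})
     ∨ ((x+2)*((y+2)*((z+2)*(w+2))) = 168 ∧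
         ({(y+2)*((z+2)*(w+2)), (x+2)*((z+2)*(w+2)), (x+2)*((y+2)*(w+2)), (x+2)*((y+2)*(z+2))} : Multiset ℕ) = {8,84,84,84}))

noncomputable instance R4dec (y z w x : ℕ) : Decidable (R4 y z w x) := by unfold R4 SF; infer_instance

def Q4 (y z w : ℕ) : Prop :=
  (y+2)*((z+2)*(w+2)) ∈ SF → ∀ x < 20, R4 y z w x

noncomputable instance Q4dec (y z w : ℕ) : Decidable (Q4 y z w) := by unfold Q4 SF; infer_instance

lemma key4 : ∀ y < 20, ∀ z < 20, ∀ w < 20, Q4 y z w := by decide +kernel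

def R5 (y z w v x : ℕ) : Prop :=
  (x+2)*((z+2)*((w+2)*(v+2))) ∈ SF → (x+2)*((y+2)*((w+2)*(v+2))) ∈ SF →
   (x+2)*((y+2)*((z+2)*(v+2))) ∈ SF → (x+2)*((y+2)*((z+2)*(w+2))) ∈ SF →
    (x+2)*((y+2)*((z+2)*((w+2)*(v+2)))) ∈ ([32,48,72,80,96] : List ℕ)

noncomputable instance R5dec (y z w v x : ℕ) : Decidable (R5 y z w v x) := by unfold R5 SF; infer_instance

def Q5 (y z w v : ℕ) : Prop :=
  (y+2)*((z+2)*((w+2)*(v+2))) ∈ SF → ∀ x < 9, R5 y z w v x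

noncomputable instance Q5dec (y z w v : ℕ) : Decidable (Q5 y z w v) := by unfold Q5 SF; infer_instance

lemma key5 : ∀ y < 9, ∀ z < 9, ∀ w < 9, ∀ v < 9, Q5 y z w v := by decide +kernel

lemma pf_two {x p q a b : ℕ} (hp : p.Prime) (hq : q.Prime) (hx : x = p^a * q^b)
    (ha : a ≠ 0) : x.primeFactors.card ≠ 3 := by
  subst hx
  rcases Nat.eq_zero_or_pos b with rfl | hb
  · rw [pow_zero, mul_one, Nat.primeFactors_prime_pow ha hp]
    simp
  · rw [Nat.primeFactors_mul (pow_ne_zero _ hp.pos.ne') (pow_ne_zero _ hq.pos.ne'),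
        Nat.primeFactors_prime_pow ha hp, Nat.primeFactors_prime_pow hb.ne' hq]
    have h := Finset.card_union_le ({p} : Finset ℕ) {q}
    simp only [Finset.card_singleton] at h
    omega

/-- If `4 ≤ n ≤ 5`, `a 1, …, a n ≥ 2` are integers, `N = ∏ a i`, each
`α i = ∏_{j ≠ i} a j` lies in the list `S`, and `N` has exactly `3` distinct prime
divisors, then `n = 4` and either `N = 60` with `{α i} = {12, 20, 30, 30}` as a
multiset, or `N = 168` with `{α i} = {8, 84, 84, 84}` as a multiset. -/
theorem stmt_7 (n : ℕ) (hn4 : 4 ≤ n) (hn5 : n ≤ 5) (a : Fin n → ℕ)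
    (ha : ∀ i, 2 ≤ a i)
    (N : ℕ) (hN : N = ∏ i, a i)
    (α : Fin n → ℕ) (hα : ∀ i, α i = ∏ j ∈ Finset.univ.erase i, a j)
    (hS : ∀ i, α i ∈ ({2, 3, 4, 5, 6, 8, 9, 10, 12, 15, 16, 18, 20, 24, 30, 36, 40, 48, 84} : Finset ℕ))
    (h3 : N.primeFactors.card = 3) :
    n = 4 ∧
      ((N = 60 ∧ Multiset.map α Finset.univ.val = ({12, 20, 30, 30} : Multiset ℕ)) ∨
       (N = 168 ∧ Multiset.map α Finset.univ.val = ({8, 84, 84, 84} : Multiset ℕ))) := by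
  have hSF : ∀ i, α i ∈ SF := hS
  have prodN : ∀ i, a i * α i = N := fun i => by
    rw [hα i, hN, Finset.mul_prod_erase _ _ (Finset.mem_univ i)]
  have h84 : ∀ i, α i ≤ 84 := fun i => by
    have := hS i
    simp only [Finset.mem_insert, Finset.mem_singleton] at this
    omega
  obtain rfl | rfl : n = 4 ∨ n = 5 := by omega
  · -- n = 4
    have hN4 : N = a 0 * (a 1 * (a 2 * a 3)) := by rw [hN, Fin.prod_univ_four]; ring
    have e0 : α 0 = a 1 * (a 2 * a 3) :=
      Nat.eq_of_mul_eq_mul_left (by have := ha 0; omega) ((prodN 0).trans hN4)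
    have e1 : α 1 = a 0 * (a 2 * a 3) :=
      Nat.eq_of_mul_eq_mul_left (by have := ha 1; omega)
        ((prodN 1).trans (hN4.trans (by ring)))
    have e2 : α 2 = a 0 * (a 1 * a 3) :=
      Nat.eq_of_mul_eq_mul_left (by have := ha 2; omega)
        ((prodN 2).trans (hN4.trans (by ring)))
    have e3 : α 3 = a 0 * (a 1 * a 2) :=
      Nat.eq_of_mul_eq_mul_left (by have := ha 3; omega)
        ((prodN 3).trans (hN4.trans (by ring)))
    -- bounds
    have b1 : a 1 ≤ 21 := by
      have h4 : 4 ≤ a 2 * a 3 := Nat.mul_le_mul (ha 2) (ha 3)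
      have := Nat.mul_le_mul_left (a 1) h4
      have := h84 0
      omega
    have b0 : a 0 ≤ 21 := by
      have h4 : 4 ≤ a 2 * a 3 := Nat.mul_le_mul (ha 2) (ha 3)
      have := Nat.mul_le_mul_left (a 0) h4
      have := h84 1
      omega
    have b2 : a 2 ≤ 21 := by
      have hc : a 2 * (a 0 * a 3) = a 0 * (a 2 * a 3) := by ring
      have h4 : 4 ≤ a 0 * a 3 := Nat.mul_le_mul (ha 0) (ha 3)
      have := Nat.mul_le_mul_left (a 2) h4
      have := h84 1
      omega
    have b3 : a 3 ≤ 21 := by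
      have hc : a 3 * (a 0 * a 2) = a 0 * (a 2 * a 3) := by ring
      have h4 : 4 ≤ a 0 * a 2 := Nat.mul_le_mul (ha 0) (ha 2)
      have := Nat.mul_le_mul_left (a 3) h4
      have := h84 1
      omega
    have K := key4 (a 1 - 2) (by have := ha 1; omega) (a 2 - 2) (by have := ha 2; omega)
      (a 3 - 2) (by have := ha 3; omega)
    unfold Q4 R4 at K
    have r1 : a 1 - 2 + 2 = a 1 := by have := ha 1; omega
    have r2 : a 2 - 2 + 2 = a 2 := by have := ha 2; omega
    have r3 : a 3 - 2 + 2 = a 3 := by have := ha 3; omega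
    rw [r1, r2, r3] at K
    have K2 := K (e0 ▸ hSF 0) (a 0 - 2) (by have := ha 0; omega)
    have r0 : a 0 - 2 + 2 = a 0 := by have := ha 0; omega
    rw [r0] at K2
    have R := K2 (e1 ▸ hSF 1) (e2 ▸ hSF 2) (e3 ▸ hSF 3)
    rw [← hN4] at R
    refine ⟨rfl, ?_⟩
    have hmap : Multiset.map α Finset.univ.val = {α 0, α 1, α 2, α 3} := rfl
    rcases R with bad | ⟨hv, hm⟩ | ⟨hv, hm⟩
    · exfalso
      simp only [List.mem_cons, List.not_mem_nil, or_false] at bad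
      rcases bad with rfl | rfl | rfl | rfl | rfl | rfl | rfl | rfl | rfl | rfl
      · exact pf_two Nat.prime_two Nat.prime_three (show 16 = 2^4 * 3^0 by norm_num) (by norm_num) h3
      · exact pf_two Nat.prime_two Nat.prime_three (show 24 = 2^3 * 3^1 by norm_num) (by norm_num) h3
      · exact pf_two Nat.prime_two Nat.prime_three (show 32 = 2^5 * 3^0 by norm_num) (by norm_num) h3
      · exact pf_two Nat.prime_two Nat.prime_three (show 36 = 2^2 * 3^2 by norm_num) (by norm_num) h3
      · exact pf_two Nat.prime_two (by norm_num : Nat.Prime 5) (show 40 = 2^3 * 5^1 by norm_num) (by norm_num) h3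
      · exact pf_two Nat.prime_two Nat.prime_three (show 48 = 2^4 * 3^1 by norm_num) (by norm_num) h3
      · exact pf_two Nat.prime_two Nat.prime_three (show 72 = 2^3 * 3^2 by norm_num) (by norm_num) h3
      · exact pf_two Nat.prime_two (by norm_num : Nat.Prime 5) (show 80 = 2^4 * 5^1 by norm_num) (by norm_num) h3
      · exact pf_two Nat.prime_two Nat.prime_three (show 96 = 2^5 * 3^1 by norm_num) (by norm_num) h3
      · exact pf_two Nat.prime_two Nat.prime_three (show 144 = 2^4 * 3^2 by norm_num) (by norm_num) h3
    · exact Or.inl ⟨hv, by rw [hmap, e0, e1, e2, e3]; exact hm⟩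
    · exact Or.inr ⟨hv, by rw [hmap, e0, e1, e2, e3]; exact hm⟩
  · -- n = 5
    exfalso
    have hN5 : N = a 0 * (a 1 * (a 2 * (a 3 * a 4))) := by rw [hN, Fin.prod_univ_five]; ring
    have e0 : α 0 = a 1 * (a 2 * (a 3 * a 4)) :=
      Nat.eq_of_mul_eq_mul_left (by have := ha 0; omega) ((prodN 0).trans hN5)
    have e1 : α 1 = a 0 * (a 2 * (a 3 * a 4)) :=
      Nat.eq_of_mul_eq_mul_left (by have := ha 1; omega)
        ((prodN 1).trans (hN5.trans (by ring)))
    have e2 : α 2 = a 0 * (a 1 * (a 3 * a 4)) :=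
      Nat.eq_of_mul_eq_mul_left (by have := ha 2; omega)
        ((prodN 2).trans (hN5.trans (by ring)))
    have e3 : α 3 = a 0 * (a 1 * (a 2 * a 4)) :=
      Nat.eq_of_mul_eq_mul_left (by have := ha 3; omega)
        ((prodN 3).trans (hN5.trans (by ring)))
    have e4 : α 4 = a 0 * (a 1 * (a 2 * a 3)) :=
      Nat.eq_of_mul_eq_mul_left (by have := ha 4; omega)
        ((prodN 4).trans (hN5.trans (by ring)))
    have b1 : a 1 ≤ 10 := by
      have h8 : 8 ≤ a 2 * (a 3 * a 4) :=
        Nat.mul_le_mul (ha 2) (Nat.mul_le_mul (ha 3) (ha 4))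
      have := Nat.mul_le_mul_left (a 1) h8
      have := h84 0
      omega
    have b0 : a 0 ≤ 10 := by
      have h8 : 8 ≤ a 2 * (a 3 * a 4) :=
        Nat.mul_le_mul (ha 2) (Nat.mul_le_mul (ha 3) (ha 4))
      have := Nat.mul_le_mul_left (a 0) h8
      have := h84 1
      omega
    have b2 : a 2 ≤ 10 := by
      have hc : a 2 * (a 0 * (a 3 * a 4)) = a 0 * (a 2 * (a 3 * a 4)) := by ring
      have h8 : 8 ≤ a 0 * (a 3 * a 4) :=
        Nat.mul_le_mul (ha 0) (Nat.mul_le_mul (ha 3) (ha 4))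
      have := Nat.mul_le_mul_left (a 2) h8
      have := h84 1
      omega
    have b3 : a 3 ≤ 10 := by
      have hc : a 3 * (a 0 * (a 2 * a 4)) = a 0 * (a 2 * (a 3 * a 4)) := by ring
      have h8 : 8 ≤ a 0 * (a 2 * a 4) :=
        Nat.mul_le_mul (ha 0) (Nat.mul_le_mul (ha 2) (ha 4))
      have := Nat.mul_le_mul_left (a 3) h8
      have := h84 1
      omega
    have b4 : a 4 ≤ 10 := by
      have hc : a 4 * (a 0 * (a 2 * a 3)) = a 0 * (a 2 * (a 3 * a 4)) := by ring
      have h8 : 8 ≤ a 0 * (a 2 * a 3) :=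
        Nat.mul_le_mul (ha 0) (Nat.mul_le_mul (ha 2) (ha 3))
      have := Nat.mul_le_mul_left (a 4) h8
      have := h84 1
      omega
    have K := key5 (a 1 - 2) (by have := ha 1; omega) (a 2 - 2) (by have := ha 2; omega)
      (a 3 - 2) (by have := ha 3; omega) (a 4 - 2) (by have := ha 4; omega)
    unfold Q5 R5 at K
    have r1 : a 1 - 2 + 2 = a 1 := by have := ha 1; omega
    have r2 : a 2 - 2 + 2 = a 2 := by have := ha 2; omega
    have r3 : a 3 - 2 + 2 = a 3 := by have := ha 3; omega
    have r4 : a 4 - 2 + 2 = a 4 := by have := ha 4; omega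
    rw [r1, r2, r3, r4] at K
    have K2 := K (e0 ▸ hSF 0) (a 0 - 2) (by have := ha 0; omega)
    have r0 : a 0 - 2 + 2 = a 0 := by have := ha 0; omega
    rw [r0] at K2
    have R := K2 (e1 ▸ hSF 1) (e2 ▸ hSF 2) (e3 ▸ hSF 3) (e4 ▸ hSF 4)
    rw [← hN5] at R
    simp only [List.mem_cons, List.not_mem_nil, or_false] at R
    rcases R with rfl | rfl | rfl | rfl | rfl
    · exact pf_two Nat.prime_two Nat.prime_three (show 32 = 2^5 * 3^0 by norm_num) (by norm_num) h3
    · exact pf_two Nat.prime_two Nat.prime_three (show 48 = 2^4 * 3^1 by norm_num) (by norm_num) h3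
    · exact pf_two Nat.prime_two Nat.prime_three (show 72 = 2^3 * 3^2 by norm_num) (by norm_num) h3
    · exact pf_two Nat.prime_two (by norm_num : Nat.Prime 5) (show 80 = 2^4 * 5^1 by norm_num) (by norm_num) h3
    · exact pf_two Nat.prime_two Nat.prime_three (show 96 = 2^5 * 3^1 by norm_num) (by norm_num) h3
end

section
/- Let n be an integer with 4 ≤ n ≤ 5 and let a_1, …, a_n be integers with each a_i ≥ 2. Set N = ∏_{i=1}^n a_i and for each i set α_i = ∏_{j ≠ i} a_j. Suppose α_i ∈ S for every i, where S = {2,3,4,5,6,8,9,10,12,15,16,18,20,24,30,36,40,48,84}, and suppose N is a power of a single prime. Then either N = 16 and n = 4, or N = 32. -/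
/-- If `4 ≤ n ≤ 5`, `a 1, …, a n ≥ 2` are integers, `N = ∏ a i`, each
`α i = ∏_{j ≠ i} a j` lies in the list `S`, and `N` is a power of a single prime,
then either `N = 16` and `n = 4`, or `N = 32`. -/
theorem stmt_9 (n : ℕ) (hn4 : 4 ≤ n) (hn5 : n ≤ 5) (a : Fin n → ℕ)
    (ha : ∀ i, 2 ≤ a i)
    (N : ℕ) (hN : N = ∏ i, a i)
    (α : Fin n → ℕ) (hα : ∀ i, α i = ∏ j ∈ Finset.univ.erase i, a j)
    (hS : ∀ i, α i ∈ ({2, 3, 4, 5, 6, 8, 9, 10, 12, 15, 16, 18, 20, 24, 30, 36, 40, 48, 84} : Finset ℕ))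
    (hpp : ∃ (p k : ℕ), p.Prime ∧ N = p ^ k) :
    (N = 16 ∧ n = 4) ∨ N = 32 := by
  obtain ⟨p, k, hp, hNpk⟩ := hpp
  have hNpos : 0 < N := by
    rw [hN]; exact Finset.prod_pos (fun i _ => lt_of_lt_of_le two_pos (ha i))
  have haN : ∀ i, a i * α i = N := by
    intro i
    rw [hα i, hN]
    exact Finset.mul_prod_erase Finset.univ a (Finset.mem_univ i)
  have hSd : ∀ i, α i = 2 ∨ α i = 3 ∨ α i = 4 ∨ α i = 5 ∨ α i = 6 ∨ α i = 8 ∨ α i = 9 ∨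
      α i = 10 ∨ α i = 12 ∨ α i = 15 ∨ α i = 16 ∨ α i = 18 ∨ α i = 20 ∨ α i = 24 ∨
      α i = 30 ∨ α i = 36 ∨ α i = 40 ∨ α i = 48 ∨ α i = 84 := by
    intro i
    have := hS i
    simpa [Finset.mem_insert] using this
  -- every a i is divisible by p
  have hpa : ∀ i, p ∣ a i := by
    intro i
    have h1 : a i ∣ p ^ k := by
      rw [← hNpk]; exact ⟨α i, (haN i).symm⟩
    obtain ⟨m, hm, he⟩ := (Nat.dvd_prime_pow hp).mp h1
    rcases Nat.eq_zero_or_pos m with h0 | h0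
    · exfalso; have := ha i; rw [h0, pow_zero] at he; omega
    · exact he ▸ dvd_pow_self p h0.ne'
  -- p^3 divides every α i
  have hp3α : ∀ i, p ^ 3 ∣ α i := by
    intro i
    have hd : ∏ _j ∈ Finset.univ.erase i, p ∣ ∏ j ∈ Finset.univ.erase i, a j :=
      Finset.prod_dvd_prod_of_dvd _ _ (fun j _ => hpa j)
    rw [Finset.prod_const] at hd
    have hc : (Finset.univ.erase i).card = n - 1 := by
      rw [Finset.card_erase_of_mem (Finset.mem_univ i), Finset.card_univ, Fintype.card_fin]
    rw [hc, ← hα i] at hd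
    exact (pow_dvd_pow p (by omega : 3 ≤ n - 1)).trans hd
  have i0 : Fin n := ⟨0, by omega⟩
  -- p ≤ 4
  have hple : p ≤ 4 := by
    by_contra h
    have h5 : 5 ≤ p := by omega
    have h1 : p ^ 3 ≤ α i0 := Nat.le_of_dvd (by have := hSd i0; omega) (hp3α i0)
    have h2 : 5 ^ 3 ≤ p ^ 3 := Nat.pow_le_pow_left h5 3
    have := hSd i0
    omega
  have hp2 : 2 ≤ p := hp.two_le
  have hp23 : p = 2 ∨ p = 3 := by
    interval_cases p
    · left; rfl
    · right; rfl
    · exact absurd hp (by norm_num)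
  -- p = 3 impossible
  have hp2' : p = 2 := by
    rcases hp23 with h | h
    · exact h
    · exfalso
      have h27 : 27 ∣ α i0 := by have := hp3α i0; rw [h] at this; norm_num at this; exact this
      have := hSd i0
      omega
  subst hp2'
  -- each α i ∈ {8, 16}
  have hα816 : ∀ i, α i = 8 ∨ α i = 16 := by
    intro i
    have h8 : 8 ∣ α i := by have := hp3α i; norm_num at this; exact this
    have hdvdN : α i ∣ 2 ^ k := by rw [← hNpk]; exact ⟨a i, by rw [mul_comm]; exact (haN i).symm⟩
    have hd := hSd i
    rcases hd with h|h|h|h|h|h|h|h|h|h|h|h|h|h|h|h|h|h|h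
    all_goals try omega
    · -- α i = 24
      exfalso
      have h3 : (3 : ℕ) ∣ 2 ^ k := dvd_trans (by rw [h]; norm_num) hdvdN
      have := Nat.Prime.dvd_of_dvd_pow Nat.prime_three h3
      omega
    · -- α i = 40
      exfalso
      have h5 : (5 : ℕ) ∣ 2 ^ k := dvd_trans (by rw [h]; norm_num) hdvdN
      have := Nat.Prime.dvd_of_dvd_pow (by norm_num : Nat.Prime 5) h5
      omega
    · -- α i = 48
      exfalso
      have h3 : (3 : ℕ) ∣ 2 ^ k := dvd_trans (by rw [h]; norm_num) hdvdN
      have := Nat.Prime.dvd_of_dvd_pow Nat.prime_three h3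
      omega
  -- N ≤ 16 * a i
  have hN16 : ∀ i, N ≤ 16 * a i := by
    intro i
    have h1 := haN i
    have h2 := hα816 i
    have h3 := ha i
    rcases h2 with h | h <;> rw [h] at h1 <;> omega
  -- N ^ n ≤ 16 ^ n * N
  have hprod : N ^ n ≤ 16 ^ n * N := by
    calc N ^ n = ∏ _i : Fin n, N := by
          rw [Finset.prod_const, Finset.card_univ, Fintype.card_fin]
      _ ≤ ∏ i, 16 * a i := Finset.prod_le_prod' (fun i _ => hN16 i)
      _ = 16 ^ n * ∏ i, a i := by
          rw [Finset.prod_mul_distrib, Finset.prod_const, Finset.card_univ, Fintype.card_fin]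
      _ = 16 ^ n * N := by rw [hN]
  have hNn1 : N ^ (n - 1) ≤ 16 ^ n := by
    have h1 : N ^ (n - 1) * N ≤ 16 ^ n * N := by
      rw [← pow_succ]
      have : n - 1 + 1 = n := by omega
      rw [this]; exact hprod
    exact Nat.le_of_mul_le_mul_right h1 hNpos
  -- 2^n ≤ N
  have h2n : 2 ^ n ≤ N := by
    rw [hN]
    calc (2 : ℕ) ^ n = ∏ _i : Fin n, 2 := by
          rw [Finset.prod_const, Finset.card_univ, Fintype.card_fin]
      _ ≤ ∏ i, a i := Finset.prod_le_prod' (fun i _ => ha i)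
  -- translate to exponents
  rw [hNpk] at hNn1 h2n
  have hkn1 : k * (n - 1) ≤ 4 * n := by
    have h1 : (2 : ℕ) ^ (k * (n - 1)) ≤ 2 ^ (4 * n) := by
      rw [pow_mul, pow_mul]
      calc ((2 : ℕ) ^ k) ^ (n - 1) ≤ 16 ^ n := hNn1
        _ = ((2 : ℕ) ^ 4) ^ n := by norm_num
    exact (Nat.pow_le_pow_iff_right (by norm_num : 1 < 2)).mp h1
  have hnk : n ≤ k := (Nat.pow_le_pow_iff_right (by norm_num : 1 < 2)).mp h2n
  have hn45 : n = 4 ∨ n = 5 := by omega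
  rcases hn45 with hn | hn
  · subst hn
    have hk45 : k = 4 ∨ k = 5 := by omega
    rcases hk45 with hk | hk
    · left; subst hk; rw [hNpk]; norm_num
    · right; subst hk; rw [hNpk]; norm_num
  · subst hn
    have hk5 : k = 5 := by omega
    right; subst hk5; rw [hNpk]; norm_num
end

section
/- No group of order 36 is generated by two elements a and b such that a has order 2, b has order 3, and a·b has order 18. -/
/-- No group of order 36 is generated by two elements `a` and `b` such that `a` has
order 2, `b` has order 3, and `a * b` has order 18. -/
theorem stmt_11 (G : Type*) [Group G] (hG : Nat.card G = 36) :
    ¬ ∃ a b : G, Subgroup.closure ({a, b} : Set G) = ⊤ ∧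
      orderOf a = 2 ∧ orderOf b = 3 ∧ orderOf (a * b) = 18 := by
  rintro ⟨a, b, hgen, ha, hb, hab⟩
  set c := a * b with hc
  set H := Subgroup.zpowers c with hHdef
  have hcH : c ∈ H := Subgroup.mem_zpowers c
  have hH : Nat.card H = 18 := by rw [hHdef, Nat.card_zpowers]; exact hab
  have hidx : H.index = 2 := by
    have h2 := Subgroup.card_mul_index H
    rw [hH, hG] at h2; omega
  have ha2 : a * a = 1 := by
    have := pow_orderOf_eq_one a
    rwa [ha, pow_two] at this
  have hainv : a⁻¹ = a := inv_eq_of_mul_eq_one_right ha2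
  -- conjugate of c by a lies in H (index two subgroup)
  have hm : a * c * a⁻¹ ∈ H := by
    rw [Subgroup.mul_mem_iff_of_index_two hidx,
      Subgroup.mul_mem_iff_of_index_two hidx, inv_mem_iff]
    simp [hcH]
  have hbac : b = a * c := by
    rw [hc, ← mul_assoc, ha2, one_mul]
  have hb3 : (a * c) ^ 3 = 1 := by
    rw [← hbac, ← hb, pow_orderOf_eq_one]
  have hm' : a * c * a ∈ H := by rwa [hainv] at hm
  have key : (a * c * a) * c * (a * c) = 1 := by
    have h := hb3
    rw [pow_succ, pow_two] at h
    simpa [mul_assoc] using h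
  have hacH : a * c ∈ H := by
    rw [eq_inv_of_mul_eq_one_right key]
    exact Subgroup.inv_mem _ (Subgroup.mul_mem _ hm' hcH)
  have haH : a ∈ H := by
    have := Subgroup.mul_mem _ hacH (Subgroup.inv_mem _ hcH)
    simpa [mul_assoc] using this
  have hbH : b ∈ H := hbac ▸ hacH
  have htop : H = ⊤ :=
    le_antisymm le_top
      (hgen ▸ (Subgroup.closure_le H).mpr (by rintro x (rfl | rfl) <;> assumption))
  have : Nat.card H = 36 := by rw [htop, ← hG]; exact Subgroup.card_top
  omega
end

section
/- There is no group G of order 60 admitting both of the following: (i) elements a, b ∈ G with ⟨a,b⟩ = G, a of order 2, b of order 3, and a·b of order 10; and (ii) elements c, d ∈ G with ⟨c,d⟩ = G, c of order 2, d of order 5, and c·d of order 5. -/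
/-- There is no group of order 60 having both a generating pair `(a, b)` with
`a` of order 2, `b` of order 3 and `a * b` of order 10, and a generating pair
`(c, d)` with `c` of order 2, `d` of order 5 and `c * d` of order 5. -/
theorem stmt_12 (G : Type*) [Group G] (hG : Nat.card G = 60) :
    ¬ ((∃ a b : G, Subgroup.closure ({a, b} : Set G) = ⊤ ∧
          orderOf a = 2 ∧ orderOf b = 3 ∧ orderOf (a * b) = 10) ∧
       (∃ c d : G, Subgroup.closure ({c, d} : Set G) = ⊤ ∧
          orderOf c = 2 ∧ orderOf d = 5 ∧ orderOf (c * d) = 5)) := by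
  rintro ⟨⟨a, b, hab, ha, hb, hab10⟩, ⟨c, d, hcd, hc, hd, hcd5⟩⟩
  have hfin : Finite G := Nat.finite_of_card_ne_zero (by omega)
  haveI : Fact (Nat.Prime 5) := ⟨by norm_num⟩
  set g : G := a * b with hg
  have hg2 : orderOf (g ^ 2) = 5 := by
    rw [orderOf_pow, hab10]
    norm_num
  have hfact : (Nat.card G).factorization 5 = 1 := by
    have h : (60:ℕ) = 5 * 12 := by norm_num
    rw [hG, h, Nat.factorization_mul (by norm_num) (by norm_num)]
    simp [Nat.Prime.factorization (by norm_num : Nat.Prime 5),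
      Nat.factorization_eq_zero_of_not_dvd (by norm_num : ¬ 5 ∣ 12)]
  have hcardz : Nat.card (Subgroup.zpowers (g ^ 2)) = 5 ^ (Nat.card G).factorization 5 := by
    rw [Nat.card_zpowers, hg2, hfact, pow_one]
  set P : Sylow 5 G := Sylow.ofCard (Subgroup.zpowers (g ^ 2)) hcardz with hPdef
  have hPcoe : (P : Subgroup G) = Subgroup.zpowers (g ^ 2) := rfl
  have hPcard : Nat.card (P : Subgroup G) = 5 := by
    rw [hPcoe, Nat.card_zpowers, hg2]
  have hPindex : (P : Subgroup G).index = 12 := by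
    have h := Subgroup.card_mul_index (P : Subgroup G)
    rw [hPcard, hG] at h
    omega
  by_cases hn : Nat.card (Sylow 5 G) = 1
  · -- unique Sylow 5-subgroup; derive contradiction from (c, d)
    haveI : Subsingleton (Sylow 5 G) := (Nat.card_eq_one_iff_unique.mp hn).1
    have hdP : d ∈ (P : Subgroup G) := by
      obtain ⟨Q, hQ⟩ := (IsPGroup.of_card
        (show Nat.card (Subgroup.zpowers d) = 5 ^ 1 by
          rw [Nat.card_zpowers, hd, pow_one])).exists_le_sylow
      have hQP : Q = P := Subsingleton.elim _ _
      exact hQP ▸ hQ (Subgroup.mem_zpowers d)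
    have hcdP : c * d ∈ (P : Subgroup G) := by
      obtain ⟨Q, hQ⟩ := (IsPGroup.of_card
        (show Nat.card (Subgroup.zpowers (c * d)) = 5 ^ 1 by
          rw [Nat.card_zpowers, hcd5, pow_one])).exists_le_sylow
      have hQP : Q = P := Subsingleton.elim _ _
      exact hQP ▸ hQ (Subgroup.mem_zpowers (c * d))
    have hcP : c ∈ (P : Subgroup G) := by
      have := mul_mem hcdP (inv_mem hdP)
      simpa using this
    have hdvd : orderOf c ∣ Nat.card (P : Subgroup G) :=
      Subgroup.orderOf_dvd_natCard _ hcP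
    rw [hPcard, hc] at hdvd
    omega
  · -- six Sylow 5-subgroups
    have h6 : Nat.card (Sylow 5 G) = 6 := by
      have h1 : Nat.card (Sylow 5 G) ∣ 12 := hPindex ▸ P.card_dvd_index
      have h2 : Nat.card (Sylow 5 G) % 5 = 1 % 5 := card_sylow_modEq_one 5 G
      have h3 : Nat.card (Sylow 5 G) ≤ 12 := Nat.le_of_dvd (by norm_num) h1
      interval_cases h : Nat.card (Sylow 5 G) <;> omega
    have hNindex : (Subgroup.normalizer (P : Set G)).index = 6 := by
      rw [← Sylow.card_eq_index_normalizer, h6]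
    have hNcard : Nat.card (Subgroup.normalizer (P : Set G)) = 10 := by
      have h := Subgroup.card_mul_index (Subgroup.normalizer (P : Set G))
      rw [hNindex, hG] at h
      omega
    have hcommP : ∀ h ∈ Subgroup.zpowers (g ^ 2), Commute g h := by
      intro h hh
      obtain ⟨k, hk⟩ := Subgroup.mem_zpowers_iff.mp hh
      exact hk ▸ ((Commute.refl g).pow_right 2).zpow_right k
    have hgN : g ∈ (Subgroup.normalizer ((P : Subgroup G) : Set G)) := by
      rw [hPcoe, Subgroup.mem_normalizer_iff]
      intro h
      constructor
      · intro hh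
        have e : g * h * g⁻¹ = h := by rw [(hcommP h hh).eq, mul_inv_cancel_right]
        rwa [e]
      · intro hh
        have e1 : g⁻¹ * (g * h * g⁻¹) * g = h := by group
        have e2 : g⁻¹ * (g * h * g⁻¹) * g = g * h * g⁻¹ := by
          rw [(hcommP _ hh).inv_left.eq, inv_mul_cancel_right]
        rw [e1.symm.trans e2]
        exact hh
    have hZN : Subgroup.zpowers g ≤ (Subgroup.normalizer (P : Set G)) :=
      Subgroup.zpowers_le.mpr hgN
    have hZeq : Subgroup.zpowers g = (Subgroup.normalizer (P : Set G)) := by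
      apply Subgroup.eq_of_le_of_card_ge hZN
      rw [hNcard, Nat.card_zpowers, hab10]
    have hNC : (Subgroup.normalizer (P : Set G)) ≤ Subgroup.centralizer (P : Set G) := by
      rw [← hZeq]
      intro x hx
      obtain ⟨m, hm⟩ := Subgroup.mem_zpowers_iff.mp hx
      rw [Subgroup.mem_centralizer_iff]
      intro y hy
      have hy' : y ∈ Subgroup.zpowers (g ^ 2) := hy
      exact hm ▸ ((hcommP y hy').zpow_left m).symm.eq
    set f := MonoidHom.transferSylow P hNC with hf
    have htriv : ∀ x : G, orderOf x = 2 ∨ orderOf x = 3 → f x = 1 := by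
      intro x hx
      have h1 : orderOf (f x) ∣ orderOf x := orderOf_map_dvd f x
      have h2 : orderOf (f x) ∣ Nat.card (P : Subgroup G) := orderOf_dvd_natCard (f x)
      rw [hPcard] at h2
      rcases hx with h | h <;> rw [h] at h1
      · have := Nat.dvd_gcd h1 h2
        norm_num at this
        exact this
      · have := Nat.dvd_gcd h1 h2
        norm_num at this
        exact this
    have hker : f.ker = ⊤ := by
      rw [← top_le_iff, ← hab, Subgroup.closure_le]
      rintro x (rfl | rfl)
      · exact htriv _ (Or.inl ha)
      · exact htriv _ (Or.inr hb)
    have hcompl := MonoidHom.ker_transferSylow_isComplement' P hNC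
    have hfinal := hcompl.card_mul
    rw [hker, Subgroup.card_top, hPcard, hG] at hfinal
    omega
end

section
/- In the group PSL(2,7), i.e. the quotient of the special linear group SL(2, ℤ/7ℤ) of 2×2 matrices of determinant 1 over the field with 7 elements by its center, any two elements of order 2 are conjugate; that is, the elements of order 2 form a single conjugacy class. -/
open Matrix

private abbrev SL7 := Matrix.SpecialLinearGroup (Fin 2) (ZMod 7)

private lemma quad7 : ∀ p q r : ZMod 7, p^2 + q*r = -1 →
    ∃ x z : ZMod 7, r*x^2 - 2*p*x*z - q*z^2 = 1 := by decide

private lemma usq7 : ∀ u : ZMod 7, u^2 = 1 → u = 1 ∨ u = -1 := by decide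

private lemma sq1_7 : ∀ p q r s : ZMod 7, (p*s-q*r=1 ∧ p*p+q*r=1 ∧ p*q+q*s=0 ∧ r*p+s*r=0 ∧
    r*q+s*s=1) → ((p=1∧q=0∧r=0∧s=1) ∨ (p=-1∧q=0∧r=0∧s=-1)) := by decide

private lemma sqm1_7 : ∀ p q r s : ZMod 7, (p*s-q*r=1 ∧ p*p+q*r=-1 ∧ p*q+q*s=0 ∧ r*p+s*r=0 ∧
    r*q+s*s=-1) → p+s=0 := by decide

private def Smat7 : SL7 := ⟨!![0,-1;1,0], by simp [Matrix.det_fin_two]⟩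

private lemma conj_S7 (A : SL7) (h : A.val.trace = 0) : IsConj Smat7 A := by
  have hdet := A.property
  rw [Matrix.det_fin_two] at hdet
  rw [Matrix.trace_fin_two] at h
  set p := A.val 0 0 with hp
  set q := A.val 0 1 with hq
  set r := A.val 1 0 with hr
  set s := A.val 1 1 with hs
  have hsp : s = -p := by linear_combination h
  have hpq : p^2 + q*r = -1 := by linear_combination -hdet + p*hsp
  obtain ⟨x, z, hxz⟩ := quad7 p q r hpq
  set C : SL7 := ⟨!![x, p*x+q*z; z, r*x - p*z], by
    rw [Matrix.det_fin_two]; simp; linear_combination hxz⟩ with hC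
  have hCS : C * Smat7 = A * C := by
    apply Subtype.ext
    show C.val * Smat7.val = A.val * C.val
    ext i j
    fin_cases i <;> fin_cases j <;>
      simp [hC, Smat7, Matrix.mul_apply, Fin.sum_univ_two, ← hp, ← hq, ← hr, ← hs]
    · linear_combination (-x)*hpq
    · linear_combination (-z)*hsp
    · linear_combination (-z)*hpq + (z*p - r*x)*hsp
  rw [isConj_iff]
  exact ⟨C, by rw [hCS, mul_assoc, mul_inv_cancel, mul_one]⟩

private lemma trace_zero7 (A : SL7)
    (h : orderOf (QuotientGroup.mk A : SL7 ⧸ Subgroup.center SL7) = 2) :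
    A.val.trace = 0 := by
  have h2 : (QuotientGroup.mk A : SL7 ⧸ Subgroup.center SL7)^2 = 1 := by
    have := pow_orderOf_eq_one (QuotientGroup.mk A : SL7 ⧸ Subgroup.center SL7)
    rwa [h] at this
  have hmem : A^2 ∈ Subgroup.center SL7 := by
    rwa [← QuotientGroup.eq_one_iff, QuotientGroup.mk_pow]
  obtain ⟨u, hu2, hu⟩ := Matrix.SpecialLinearGroup.mem_center_iff.mp hmem
  rw [Fintype.card_fin] at hu2
  have hAA : A.val * A.val = Matrix.scalar (Fin 2) u := by
    rw [hu]; simp [pow_two]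
  obtain ⟨p, q, r, s, hA⟩ : ∃ p q r s, A.val = !![p,q;r,s] :=
    ⟨_, _, _, _, Matrix.eta_fin_two A.val⟩
  have hdet := A.property
  rw [hA, Matrix.det_fin_two_of] at hdet
  rw [hA] at hAA
  have e : ∀ i j, (!![p,q;r,s] * !![p,q;r,s]) i j = Matrix.scalar (Fin 2) u i j :=
    fun i j => by rw [hAA]
  have e00 := e 0 0; have e01 := e 0 1; have e10 := e 1 0; have e11 := e 1 1
  simp [Matrix.mul_apply, Fin.sum_univ_two, Matrix.scalar_apply, Matrix.diagonal_apply]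
    at e00 e01 e10 e11
  rw [hA, Matrix.trace_fin_two_of]
  rcases usq7 u hu2 with rfl | rfl
  · exfalso
    have hc : A ∈ Subgroup.center SL7 := by
      apply Matrix.SpecialLinearGroup.mem_center_iff.mpr
      rcases sq1_7 p q r s ⟨hdet, e00, e01, e10, e11⟩ with ⟨h1,h2,h3,h4⟩ | ⟨h1,h2,h3,h4⟩
      · refine ⟨1, by norm_num, ?_⟩
        rw [_root_.map_one, hA, h1, h2, h3, h4]
        ext i j; fin_cases i <;> fin_cases j <;> simp [Matrix.one_apply]
      · refine ⟨-1, by norm_num, ?_⟩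
        rw [map_neg, _root_.map_one, hA, h1, h2, h3, h4]
        ext i j; fin_cases i <;> fin_cases j <;> simp [Matrix.one_apply]
    rw [(QuotientGroup.eq_one_iff A).mpr hc, orderOf_one] at h
    norm_num at h
  · exact sqm1_7 p q r s ⟨hdet, e00, e01, e10, e11⟩

/-- In `PSL(2,7)`, the quotient of `SL(2, ℤ/7ℤ)` by its center, any two elements of
order 2 are conjugate. -/
theorem stmt_14
    (a b : Matrix.SpecialLinearGroup (Fin 2) (ZMod 7) ⧸
      Subgroup.center (Matrix.SpecialLinearGroup (Fin 2) (ZMod 7)))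
    (ha : orderOf a = 2) (hb : orderOf b = 2) :
    IsConj a b := by
  obtain ⟨A, rfl⟩ := QuotientGroup.mk_surjective a
  obtain ⟨B, rfl⟩ := QuotientGroup.mk_surjective b
  have hA := trace_zero7 A ha
  have hB := trace_zero7 B hb
  exact (QuotientGroup.mk' (Subgroup.center SL7)).map_isConj
    ((conj_S7 A hA).symm.trans (conj_S7 B hB))
end

section
/- Let G be the dihedral group of order 24, with presentation ⟨x, y ∣ x^12 = y^2 = 1, y x y = x^{-1}⟩. Suppose h_1, h_2, h_3, h_4 ∈ G satisfy h_1 h_2 h_3 h_4 = 1 and generate G, and suppose that either three of the h_i have order 2 and the remaining one has order 3, or three of the h_i have order 2 and the remaining one has order 4. Then some h_i equals the central involution x^6. -/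
open DihedralGroup

def par12 : DihedralGroup 12 → ZMod 2
  | DihedralGroup.r _ => 0
  | DihedralGroup.sr _ => 1

lemma par12_mul (a b : DihedralGroup 12) : par12 (a * b) = par12 a + par12 b := by
  cases a <;> cases b <;> rfl

lemma order_two_rot {k : ZMod 12} (hk : orderOf (DihedralGroup.r k : DihedralGroup 12) = 2) :
    k = 6 := by
  have h2 : (DihedralGroup.r k : DihedralGroup 12) ^ 2 = 1 := by
    rw [← hk]; exact pow_orderOf_eq_one _
  have : (DihedralGroup.r (k + k) : DihedralGroup 12) = DihedralGroup.r 0 := by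
    rw [← DihedralGroup.r_mul_r]
    rw [← pow_two, h2, DihedralGroup.one_def]
  have hkk : k + k = 0 := DihedralGroup.r.inj this
  have hk0 : k ≠ 0 := by
    rintro rfl
    simp [DihedralGroup.one_def.symm] at hk
  have hall : ∀ m : ZMod 12, m + m = 0 → m ≠ 0 → m = 6 := by decide
  exact hall k hkk hk0

/-- In the dihedral group of order 24 (with presentation
`⟨x, y ∣ x^12 = y^2 = 1, y x y = x⁻¹⟩`, realized as `DihedralGroup 12` where `x` is the
rotation `r 1`), any spherical system of four generators `h 0, h 1, h 2, h 3`
(i.e. `h 0 * h 1 * h 2 * h 3 = 1` and the `h i` generate `G`) in which three of the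
`h i` have order 2 and the remaining one has order 3 or order 4 must contain the
central involution `x^6 = r 6`. -/
theorem stmt_15 (h : Fin 4 → DihedralGroup 12)
    (hprod : h 0 * h 1 * h 2 * h 3 = 1)
    (hgen : Subgroup.closure (Set.range h) = ⊤)
    (hord : (∃ i, orderOf (h i) = 3 ∧ ∀ j, j ≠ i → orderOf (h j) = 2) ∨
            (∃ i, orderOf (h i) = 4 ∧ ∀ j, j ≠ i → orderOf (h j) = 2)) :
    ∃ i, h i = DihedralGroup.r 6 := by
  by_contra hc
  push_neg at hc
  -- for j with order 2 and h j ≠ r 6, h j is a reflection, so par12 (h j) = 1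
  have hrefl : ∀ j : Fin 4, orderOf (h j) = 2 → par12 (h j) = 1 := by
    intro j hj
    cases hhj : h j with
    | r k =>
        rw [hhj] at hj
        exact absurd (hhj.trans (by rw [order_two_rot hj])) (hc j)
    | sr k => rfl
  -- the element of order 3 or 4 is a rotation
  have hrot : ∀ j : Fin 4, orderOf (h j) ≠ 2 → par12 (h j) = 0 := by
    intro j hj
    cases hhj : h j with
    | r k => rfl
    | sr k => rw [hhj] at hj; exact absurd (DihedralGroup.orderOf_sr k) hj
  have key : ∀ i : Fin 4, orderOf (h i) ≠ 2 → (∀ j, j ≠ i → orderOf (h j) = 2) → False := by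
    intro i hi hothers
    have hsum : par12 (h 0) + par12 (h 1) + par12 (h 2) + par12 (h 3) = 0 := by
      have := congrArg par12 hprod
      rw [par12_mul, par12_mul, par12_mul] at this; exact this
    have hp : ∀ j, par12 (h j) = if j = i then 0 else 1 := by
      intro j
      by_cases hji : j = i
      · subst hji; simp [hrot _ hi]
      · simp [hji, hrefl _ (hothers j hji)]
    rw [hp, hp, hp, hp] at hsum
    fin_cases i <;> revert hsum <;> decide
  rcases hord with ⟨i, hi, ho⟩ | ⟨i, hi, ho⟩
  · exact key i (by rw [hi]; decide) ho
  · exact key i (by rw [hi]; decide) ho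
end
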